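/- For a banded matrix R with band width r (R(x,y) = 0 whenever |x−y| > r) whose inverse exists with u ≤ R†R ≤ v (0 < u ≤ v), the entries of (R†R)^{-1} decay exponentially: |(R†R)^{-1}(x,y)| ≤ C e^{−ρ|x−y|} for constants C, ρ > 0 depending only on u, v, r. -/

import Mathlib

open Matrix Finset

lemma aux_row_norm {n : Type*} [Fintype n] [DecidableEq n] (U : Matrix n n ℂ)
    (hU : U * star U = 1) (x : n) :
    ∑ i, (‖U x i‖)^2 = 1 := by
  have h := congrFun (congrFun hU x) x
  rw [Matrix.mul_apply] at h
  have : ∀ i, U x i * star U i x = ((‖U x i‖)^2 : ℝ) := by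
    intro i
    rw [Matrix.star_apply]
    rw [show star (U x i) = (starRingEnd ℂ) (U x i) from rfl, Complex.mul_conj, Complex.sq_norm]
  rw [Finset.sum_congr rfl (fun i _ => this i)] at h
  have h2 : ((∑ i, (‖U x i‖)^2 : ℝ) : ℂ) = 1 := by push_cast at h ⊢; simpa using h
  exact_mod_cast h2

lemma aux_entry_bound {n : Type*} [Fintype n] [DecidableEq n] (U : Matrix n n ℂ)
    (hU : U * star U = 1) (d : n → ℂ) (mx : ℝ) (hmx : 0 ≤ mx)
    (hd : ∀ i, ‖d i‖ ≤ mx) (x y : n) :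
    ‖(U * diagonal d * star U) x y‖ ≤ mx := by
  have hentry : (U * diagonal d * star U) x y = ∑ i, U x i * d i * star (U y i) := by
    rw [Matrix.mul_apply]
    congr 1; ext i
    rw [Matrix.mul_diagonal, Matrix.star_apply]
  rw [hentry]
  calc ‖∑ i, U x i * d i * star (U y i)‖
      ≤ ∑ i, ‖U x i * d i * star (U y i)‖ := by
        exact norm_sum_le _ _
    _ ≤ ∑ i, mx * (‖U x i‖ * ‖U y i‖) := by
        apply Finset.sum_le_sum
        intro i _
        rw [norm_mul, norm_mul]
        rw [show ‖star (U y i)‖ = ‖U y i‖ from Complex.norm_conj _]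
        calc ‖U x i‖ * ‖d i‖ * ‖U y i‖
            ≤ ‖U x i‖ * mx * ‖U y i‖ := by
              apply mul_le_mul_of_nonneg_right _ (norm_nonneg _)
              exact mul_le_mul_of_nonneg_left (hd i) (norm_nonneg _)
          _ = mx * (‖U x i‖ * ‖U y i‖) := by ring
    _ = mx * ∑ i, ‖U x i‖ * ‖U y i‖ := by rw [Finset.mul_sum]
    _ ≤ mx * 1 := by
        apply mul_le_mul_of_nonneg_left _ hmx
        have hcs := Finset.sum_mul_sq_le_sq_mul_sq Finset.univ
          (fun i => ‖U x i‖) (fun i => ‖U y i‖)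
        rw [aux_row_norm U hU x, aux_row_norm U hU y, mul_one] at hcs
        have h0 : (0:ℝ) ≤ ∑ i, ‖U x i‖ * ‖U y i‖ :=
          Finset.sum_nonneg fun i _ => mul_nonneg (norm_nonneg _) (norm_nonneg _)
        nlinarith
    _ = mx := mul_one mx

lemma aux_conj_mul {n : Type*} [Fintype n] [DecidableEq n] (U : Matrix n n ℂ)
    (hU' : star U * U = 1) (d1 d2 : n → ℂ) :
    (U * diagonal d1 * star U) * (U * diagonal d2 * star U)
      = U * diagonal (fun i => d1 i * d2 i) * star U := by
  calc (U * diagonal d1 * star U) * (U * diagonal d2 * star U)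
      = U * diagonal d1 * (star U * U) * diagonal d2 * star U := by
        simp only [Matrix.mul_assoc]
    _ = U * (diagonal d1 * diagonal d2) * star U := by
        rw [hU']; simp only [Matrix.mul_one, Matrix.mul_assoc]
    _ = U * diagonal (fun i => d1 i * d2 i) * star U := by
        rw [Matrix.diagonal_mul_diagonal]

lemma aux_conj_pow {n : Type*} [Fintype n] [DecidableEq n] (U : Matrix n n ℂ)
    (hU : U * star U = 1) (hU' : star U * U = 1) (d : n → ℂ) (k : ℕ) :
    (U * diagonal d * star U)^k = U * diagonal (fun i => d i ^ k) * star U := by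
  induction k with
  | zero => simp [pow_zero, Matrix.diagonal_one, hU]
  | succ k ih =>
    rw [pow_succ, ih, aux_conj_mul U hU' _ _]
    have : (fun i => d i ^ k * d i) = fun i => d i ^ (k+1) := by
      funext i; rw [pow_succ]
    rw [this]

lemma aux_band_mul {M : ℕ} (P Q : Matrix (Fin M) (Fin M) ℂ) (a b : ℤ)
    (hP : ∀ x y : Fin M, a < |(x:ℤ) - (y:ℤ)| → P x y = 0)
    (hQ : ∀ x y : Fin M, b < |(x:ℤ) - (y:ℤ)| → Q x y = 0)
    (x y : Fin M) (hxy : a + b < |(x:ℤ) - (y:ℤ)|) : (P * Q) x y = 0 := by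
  rw [Matrix.mul_apply]
  apply Finset.sum_eq_zero
  intro z _
  by_cases h : a < |(x:ℤ) - (z:ℤ)|
  · rw [hP x z h, zero_mul]
  · push_neg at h
    have htri : |(x:ℤ) - (y:ℤ)| ≤ |(x:ℤ) - (z:ℤ)| + |(z:ℤ) - (y:ℤ)| := abs_sub_le _ _ _
    rw [hQ z y (by linarith), mul_zero]

/-- For banded matrices R of band width r with u ≤ R†R ≤ v (0 < u ≤ v), the entries
of (R†R)⁻¹ decay exponentially, with constants depending only on u, v, r. -/
theorem banded_inverse_exponential_decay (u v : ℝ) (r : ℕ)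
    (hu : 0 < u) (huv : u ≤ v) (hr : 0 < r) :
    ∃ C ρ : ℝ, 0 < C ∧ 0 < ρ ∧
      ∀ (M : ℕ) (R : Matrix (Fin M) (Fin M) ℂ),
        (∀ x y : Fin M, (r : ℤ) < |(x : ℤ) - (y : ℤ)| → R x y = 0) →
        (∀ i : Fin M,
          u ≤ (Matrix.isHermitian_conjTranspose_mul_self R).eigenvalues i ∧
          (Matrix.isHermitian_conjTranspose_mul_self R).eigenvalues i ≤ v) →
        ∀ x y : Fin M,
          ‖(Rᴴ * R)⁻¹ x y‖ ≤ C * Real.exp (-ρ * ((|(x : ℤ) - (y : ℤ)| : ℤ) : ℝ)) := by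
  have hs : (0:ℝ) < u + v := by linarith
  set s : ℝ := u + v with hs_def
  set q : ℝ := v / s with hq_def
  set c : ℝ := 2 / s with hc_def
  have hq0 : 0 < q := div_pos (by linarith) hs
  have hq1 : q < 1 := by
    rw [hq_def, div_lt_one hs]; linarith
  have hlogq : Real.log q < 0 := Real.log_neg hq0 hq1
  refine ⟨u⁻¹, Real.log q⁻¹ / (2*r), inv_pos.mpr hu, ?_, ?_⟩
  · apply div_pos
    · rw [Real.log_inv]; linarith
    · positivity
  intro M R hband heig x y
  set ρ : ℝ := Real.log q⁻¹ / (2*r) with hρ_def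
  set A : Matrix (Fin M) (Fin M) ℂ := Rᴴ * R with hA_def
  set lam : Fin M → ℝ := (Matrix.isHermitian_conjTranspose_mul_self R).eigenvalues with hlam_def
  set U : Matrix (Fin M) (Fin M) ℂ :=
    ((Matrix.isHermitian_conjTranspose_mul_self R).eigenvectorUnitary : Matrix (Fin M) (Fin M) ℂ)
    with hU_def
  have hU : U * star U = 1 :=
    Matrix.mem_unitaryGroup_iff.mp (Matrix.isHermitian_conjTranspose_mul_self R).eigenvectorUnitary.2
  have hU' : star U * U = 1 :=
    Matrix.mem_unitaryGroup_iff'.mp (Matrix.isHermitian_conjTranspose_mul_self R).eigenvectorUnitary.2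
  have hspec : A = U * diagonal (fun i => ((lam i : ℝ) : ℂ)) * star U :=
    (Matrix.isHermitian_conjTranspose_mul_self R).spectral_theorem
  have hlamu : ∀ i, u ≤ lam i := fun i => (heig i).1
  have hlamv : ∀ i, lam i ≤ v := fun i => (heig i).2
  have hlam0 : ∀ i, ((lam i : ℝ) : ℂ) ≠ 0 := by
    intro i
    have : (0:ℝ) < lam i := lt_of_lt_of_le hu (hlamu i)
    exact_mod_cast ne_of_gt this
  -- inverse of A
  set Ainv : Matrix (Fin M) (Fin M) ℂ :=
    U * diagonal (fun i => ((lam i : ℝ) : ℂ)⁻¹) * star U with hAinv_def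
  have hright : A * Ainv = 1 := by
    rw [hspec, hAinv_def, aux_conj_mul U hU']
    have : (fun i => ((lam i : ℝ) : ℂ) * ((lam i : ℝ) : ℂ)⁻¹) = fun _ => (1:ℂ) := by
      funext i; exact mul_inv_cancel₀ (hlam0 i)
    rw [this, Matrix.diagonal_one, Matrix.mul_one, hU]
  have hAi : A⁻¹ = Ainv := Matrix.inv_eq_right_inv hright
  have hleft : A⁻¹ * A = 1 := by rw [hAi]; exact mul_eq_one_comm.mp hright
  -- the matrix B
  set B : Matrix (Fin M) (Fin M) ℂ := 1 - (c:ℂ) • A with hB_def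
  have hBdiag : B = U * diagonal (fun i => ((1 - c * lam i : ℝ) : ℂ)) * star U := by
    have h1 : diagonal (fun i : Fin M => ((1 - c * lam i : ℝ) : ℂ))
        = 1 - (c:ℂ) • diagonal (fun i => ((lam i : ℝ) : ℂ)) := by
      ext i j
      by_cases h : i = j
      · subst h
        simp only [Matrix.diagonal_apply_eq, Matrix.sub_apply, Matrix.one_apply_eq,
          Matrix.smul_apply, smul_eq_mul]
        push_cast; ring
      · simp [Matrix.diagonal_apply_ne _ h, Matrix.one_apply_ne h]
    rw [hB_def, h1, Matrix.mul_sub, Matrix.sub_mul, Matrix.mul_one, hU]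
    congr 1
    rw [Matrix.mul_smul, Matrix.smul_mul, hspec]
  -- bandedness
  have hAband : ∀ x y : Fin M, (2*(r:ℤ)) < |(x:ℤ) - (y:ℤ)| → A x y = 0 := by
    intro x y hxy
    rw [hA_def, Matrix.mul_apply]
    apply Finset.sum_eq_zero
    intro z _
    rw [Matrix.conjTranspose_apply]
    by_cases h : (r : ℤ) < |(z:ℤ) - (x:ℤ)|
    · rw [hband z x h, star_zero, zero_mul]
    · push_neg at h
      have htri : |(x:ℤ) - (y:ℤ)| ≤ |(x:ℤ) - (z:ℤ)| + |(z:ℤ) - (y:ℤ)| := abs_sub_le _ _ _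
      rw [abs_sub_comm (x:ℤ) (z:ℤ)] at htri
      rw [hband z y (by linarith), mul_zero]
  have hBband : ∀ x y : Fin M, (2*(r:ℤ)) < |(x:ℤ) - (y:ℤ)| → B x y = 0 := by
    intro x y hxy
    have hne : x ≠ y := by
      intro h; subst h
      rw [sub_self, abs_zero] at hxy
      have : (0:ℤ) ≤ 2*(r:ℤ) := by positivity
      omega
    rw [hB_def, Matrix.sub_apply, Matrix.one_apply_ne hne, Matrix.smul_apply,
      hAband x y hxy, smul_zero, sub_zero]
  have hBpow : ∀ (j : ℕ) (x y : Fin M), (2*(r:ℤ)*(j:ℤ)) < |(x:ℤ) - (y:ℤ)| → (B^j) x y = 0 := by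
    intro j
    induction j with
    | zero =>
      intro x y hxy
      have hne : x ≠ y := by
        intro h; subst h
        rw [sub_self, abs_zero] at hxy
        omega
      rw [pow_zero]; exact Matrix.one_apply_ne hne
    | succ j ih =>
      intro x y hxy
      rw [pow_succ]
      apply aux_band_mul (B^j) B (2*(r:ℤ)*(j:ℤ)) (2*(r:ℤ)) ih hBband x y
      push_cast at hxy ⊢
      linarith
  -- distance and truncation order
  set d : ℤ := |(x:ℤ) - (y:ℤ)| with hd_def
  have hd0 : 0 ≤ d := abs_nonneg _
  set k : ℕ := ⌈(d:ℝ) / (2*r)⌉₊ with hk_def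
  -- geometric identity
  have hgeom : A * ((c:ℂ) • ∑ j ∈ Finset.range k, B^j) = 1 - B^k := by
    have hcA : (c:ℂ) • A = 1 - B := by rw [hB_def, sub_sub_cancel]
    calc A * ((c:ℂ) • ∑ j ∈ Finset.range k, B^j)
        = ((c:ℂ) • A) * ∑ j ∈ Finset.range k, B^j := by
          rw [Matrix.mul_smul, Matrix.smul_mul]
      _ = (1 - B) * ∑ j ∈ Finset.range k, B^j := by rw [hcA]
      _ = -((B - 1) * ∑ j ∈ Finset.range k, B^j) := by
          rw [← neg_sub B 1, Matrix.neg_mul]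
      _ = -(B^k - 1) := by rw [mul_geom_sum]
      _ = 1 - B^k := neg_sub _ _
  have hdecomp : A⁻¹ = ((c:ℂ) • ∑ j ∈ Finset.range k, B^j) + A⁻¹ * B^k := by
    have h1 : A⁻¹ * (A * ((c:ℂ) • ∑ j ∈ Finset.range k, B^j)) = A⁻¹ * (1 - B^k) :=
      congrArg _ hgeom
    rw [← Matrix.mul_assoc, hleft, Matrix.one_mul, Matrix.mul_sub, Matrix.mul_one] at h1
    rw [h1]
    abel
  -- the truncation vanishes at (x,y)
  have hzero : (((c:ℂ) • ∑ j ∈ Finset.range k, B^j)) x y = 0 := by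
    rw [Matrix.smul_apply, Matrix.sum_apply]
    have hterm : ∀ j ∈ Finset.range k, (B^j) x y = 0 := by
      intro j hj
      apply hBpow j x y
      rw [Finset.mem_range] at hj
      have hj' : (j : ℝ) < (d:ℝ) / (2*r) := Nat.lt_ceil.mp hj
      have hr' : (0:ℝ) < 2*(r:ℝ) := by positivity
      rw [lt_div_iff₀ hr'] at hj'
      have h3 : ((2*(r:ℤ)*(j:ℤ) : ℤ) : ℝ) < (d:ℝ) := by push_cast; nlinarith
      rw [← hd_def]
      exact_mod_cast h3
    rw [Finset.sum_congr rfl hterm, Finset.sum_const_zero, smul_zero]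
  have hentry_eq : A⁻¹ x y = (A⁻¹ * B^k) x y := by
    conv_lhs => rw [hdecomp]
    rw [Matrix.add_apply, hzero, zero_add]
  -- functional calculus for A⁻¹ * B^k
  have hfc : A⁻¹ * B^k
      = U * diagonal (fun i => ((lam i : ℝ) : ℂ)⁻¹ * ((1 - c * lam i : ℝ) : ℂ)^k) * star U := by
    rw [hAi, hAinv_def, hBdiag, aux_conj_pow U hU hU', aux_conj_mul U hU']
  -- entrywise bound
  have hqk_nonneg : (0:ℝ) ≤ u⁻¹ * q^k := by positivity
  have hbound : ‖(A⁻¹ * B^k) x y‖ ≤ u⁻¹ * q^k := by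
    rw [hfc]
    apply aux_entry_bound U hU _ _ hqk_nonneg _ x y
    intro i
    rw [norm_mul, norm_inv, norm_pow, Complex.norm_real, Complex.norm_real, Real.norm_eq_abs, Real.norm_eq_abs]
    have hlami : 0 < lam i := lt_of_lt_of_le hu (hlamu i)
    have h1 : |lam i|⁻¹ ≤ u⁻¹ := by
      rw [abs_of_pos hlami]
      exact inv_anti₀ hu (hlamu i)
    have e1 : 1 - c * lam i = (s - 2 * lam i) / s := by
      rw [hc_def]; field_simp
    have hup : 1 - c * lam i ≤ q := by
      rw [e1, hq_def]
      exact (div_le_div_iff_of_pos_right hs).mpr (by linarith [hlamu i])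
    have hlo : -q ≤ 1 - c * lam i := by
      rw [e1, hq_def, ← neg_div]
      exact (div_le_div_iff_of_pos_right hs).mpr (by linarith [hlamv i])
    have h2 : |1 - c * lam i| ≤ q := abs_le.mpr ⟨hlo, hup⟩
    exact mul_le_mul h1 (pow_le_pow_left₀ (abs_nonneg _) h2 k) (by positivity) (by positivity)
  -- exponential estimate
  have hexp : q^k ≤ Real.exp (-ρ * (d:ℝ)) := by
    have hq_eq : q ^ k = Real.exp ((k:ℝ) * Real.log q) := by
      rw [Real.exp_nat_mul, Real.exp_log hq0]
    rw [hq_eq, Real.exp_le_exp]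
    have hk : (d:ℝ)/(2*r) ≤ (k:ℝ) := Nat.le_ceil _
    have h2r : (0:ℝ) < 2*(r:ℝ) := by positivity
    have hρ_eq : -ρ * (d:ℝ) = ((d:ℝ)/(2*r)) * Real.log q := by
      rw [hρ_def, Real.log_inv]
      field_simp
    rw [hρ_eq]
    exact mul_le_mul_of_nonpos_right hk (le_of_lt hlogq)
  calc ‖A⁻¹ x y‖
      = ‖(A⁻¹ * B^k) x y‖ := by rw [hentry_eq]
    _ ≤ u⁻¹ * q^k := hbound
    _ ≤ u⁻¹ * Real.exp (-ρ * (d:ℝ)) :=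
        mul_le_mul_of_nonneg_left hexp (inv_pos.mpr hu).le
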